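/- Let W_n(q) = ∑_{(σ,τ)} q^{inv(σ)+inv(τ)}, where the sum runs over all pairs (σ,τ) of permutations of {1,...,n} with no common ascent. Then for all n ≥ 1, ∑_{i=0}^{n} (-1)^i [n choose i]_q^2 W_i(q) = 0, where [n choose i]_q is the Gaussian binomial coefficient. -/

import Mathlib

open Finset

/-- A common ascent of a pair of permutations of `{1,...,n}`:
an index `i` with `i+1 = j ≤ n` such that both permutations increase from `i` to `j`. -/
def CommonAscent {n : ℕ} (σ τ : Equiv.Perm (Fin n)) : Prop :=
  ∃ i j : Fin n, (i : ℕ) + 1 = (j : ℕ) ∧ σ i < σ j ∧ τ i < τ j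

instance {n : ℕ} : DecidablePred
    (fun p : Equiv.Perm (Fin n) × Equiv.Perm (Fin n) => CommonAscent p.1 p.2) := fun _ => by
  unfold CommonAscent; infer_instance

/-- The number of inversions of a permutation. -/
def inversions {n : ℕ} (σ : Equiv.Perm (Fin n)) : ℕ :=
  (Finset.univ.filter (fun p : Fin n × Fin n => p.1 < p.2 ∧ σ p.2 < σ p.1)).card

/-- `W n = ∑ q^(inv σ + inv τ)` over pairs of permutations with no common ascent,
as a polynomial in `q`. -/
noncomputable def W (n : ℕ) : Polynomial ℚ :=
  ∑ p ∈ Finset.univ.filter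
      (fun p : Equiv.Perm (Fin n) × Equiv.Perm (Fin n) => ¬ CommonAscent p.1 p.2),
    Polynomial.X ^ (inversions p.1 + inversions p.2)

/-- The `q`-analogue `[i]_q = 1 + q + ... + q^{i-1}` as a polynomial. -/
noncomputable def qInt (i : ℕ) : Polynomial ℚ := ∑ j ∈ Finset.range i, Polynomial.X ^ j

/-- The `q`-factorial `[n]_q! = ∏_{i=1}^n [i]_q`. -/
noncomputable def qFact (n : ℕ) : Polynomial ℚ := ∏ i ∈ Finset.range n, qInt (i + 1)

/-- The Gaussian binomial coefficient `[n choose i]_q = [n]_q!/([i]_q![n-i]_q!)`,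
as a rational function in `q`. -/
noncomputable def qBinom (n i : ℕ) : RatFunc ℚ :=
  algebraMap (Polynomial ℚ) (RatFunc ℚ) (qFact n) /
    (algebraMap (Polynomial ℚ) (RatFunc ℚ) (qFact i) *
      algebraMap (Polynomial ℚ) (RatFunc ℚ) (qFact (n - i)))

theorem Equiv.Perm.apply_inv_self {α : Type*} (e : Equiv.Perm α) (x : α) : e (e⁻¹ x) = x :=
  e.apply_symm_apply x

theorem Equiv.Perm.inv_apply_self {α : Type*} (e : Equiv.Perm α) (x : α) : e⁻¹ (e x) = x :=
  e.symm_apply_apply x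

namespace CSV
open Equiv Equiv.Perm Polynomial

variable {k n : ℕ}

/-- the embedded permutation -/
noncomputable def E (f : Fin k → Fin n) (hf : StrictMono f) (ρ : Perm (Fin k)) : Perm (Fin n) :=
  ρ.viaEmbedding ⟨f, hf.injective⟩

variable {f : Fin k → Fin n} {hf : StrictMono f}

lemma E_apply (ρ : Perm (Fin k)) (j : Fin k) : E f hf ρ (f j) = f (ρ j) :=
  ρ.viaEmbedding_apply _ j

lemma E_not_mem (ρ : Perm (Fin k)) (x : Fin n) (hx : x ∉ Set.range f) : E f hf ρ x = x :=
  ρ.viaEmbedding_apply_of_notMem _ x hx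

lemma E_mem_iff (ρ : Perm (Fin k)) (x : Fin n) : E f hf ρ x ∈ Set.range f ↔ x ∈ Set.range f := by
  constructor
  · intro h
    by_contra hx
    rw [E_not_mem ρ x hx] at h
    exact hx h
  · rintro ⟨j, rfl⟩
    rw [E_apply]
    exact ⟨ρ j, rfl⟩

lemma E_inv (ρ : Perm (Fin k)) : E f hf ρ⁻¹ = (E f hf ρ)⁻¹ := by
  have : E f hf ρ⁻¹ * E f hf ρ = 1 := by
    ext x
    by_cases hx : x ∈ Set.range f
    · obtain ⟨j, rfl⟩ := hx
      simp [Perm.mul_apply, E_apply]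
    · simp [Perm.mul_apply, E_not_mem _ _ hx]
  exact eq_inv_of_mul_eq_one_left this

lemma comp_strictMono (hf : StrictMono f) {s : Perm (Fin n)} (hs : StrictMonoOn ⇑s (Set.range f)) :
    StrictMono (⇑s ∘ f) := fun a b hab => hs ⟨a, rfl⟩ ⟨b, rfl⟩ (hf hab)

variable (hconv : ∀ ⦃x y z : Fin n⦄, x ∈ Set.range f → z ∈ Set.range f →
    x ≤ y → y ≤ z → y ∈ Set.range f)

include hconv in
lemma transport (g : Perm (Fin n)) (hg0 : ∀ x, g x ∈ Set.range f ↔ x ∈ Set.range f)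
    (hg1 : ∀ x ∉ Set.range f, g x = x) {p q : Fin n} (hpq : p < q)
    (hnot : ¬(p ∈ Set.range f ∧ q ∈ Set.range f)) :
    g p < g q ∧ ¬(g p ∈ Set.range f ∧ g q ∈ Set.range f) := by
  by_cases hp : p ∈ Set.range f
  · have hq : q ∉ Set.range f := fun h => hnot ⟨hp, h⟩
    rw [hg1 q hq]
    have hgp : g p ∈ Set.range f := (hg0 p).2 hp
    refine ⟨?_, fun h => hq h.2⟩
    by_contra h
    push_neg at h
    exact hq (hconv hp hgp hpq.le h)
  · rw [hg1 p hp]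
    by_cases hq : q ∈ Set.range f
    · have hgq : g q ∈ Set.range f := (hg0 q).2 hq
      refine ⟨?_, fun h => hp h.1⟩
      by_contra h
      push_neg at h
      exact hp (hconv hgq hq h hpq.le)
    · rw [hg1 q hq]
      exact ⟨hpq, hnot⟩

include hconv in
lemma inversions_mul (s : Perm (Fin n)) (ρ : Perm (Fin k))
    (hs : StrictMonoOn ⇑s (Set.range f)) :
    inversions (s * E f hf ρ) = inversions s + inversions ρ := by
  classical
  set σ := s * E f hf ρ with hσ
  have hcomp : StrictMono (⇑s ∘ f) := comp_strictMono hf hs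
  have key : ∀ (t : Perm (Fin n)),
      inversions t = ((univ.filter (fun p : Fin n × Fin n =>
          (p.1 < p.2 ∧ t p.2 < t p.1) ∧ (p.1 ∈ Set.range f ∧ p.2 ∈ Set.range f))).card +
        (univ.filter (fun p : Fin n × Fin n =>
          (p.1 < p.2 ∧ t p.2 < t p.1) ∧ ¬(p.1 ∈ Set.range f ∧ p.2 ∈ Set.range f))).card) := by
    intro t
    rw [inversions]
    rw [← Finset.card_filter_add_card_filter_not
      (p := fun p : Fin n × Fin n => p.1 ∈ Set.range f ∧ p.2 ∈ Set.range f)]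
    rw [Finset.filter_filter, Finset.filter_filter]
  -- both-in-range part of σ equals inversions ρ
  have hA : (univ.filter (fun p : Fin n × Fin n =>
      (p.1 < p.2 ∧ σ p.2 < σ p.1) ∧ (p.1 ∈ Set.range f ∧ p.2 ∈ Set.range f))).card
      = inversions ρ := by
    rw [inversions, eq_comm]
    apply Finset.card_bij (fun (a : Fin k × Fin k) _ => (f a.1, f a.2))
    · rintro ⟨j₁, j₂⟩ ha
      simp only [mem_filter, mem_univ, true_and] at ha ⊢
      refine ⟨⟨hf ha.1, ?_⟩, ⟨j₁, rfl⟩, ⟨j₂, rfl⟩⟩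
      simp only [hσ, Perm.mul_apply, E_apply]
      exact hcomp ha.2
    · rintro ⟨j₁, j₂⟩ _ ⟨l₁, l₂⟩ _ h
      simp only [Prod.mk.injEq] at h
      exact Prod.ext (hf.injective h.1) (hf.injective h.2)
    · rintro ⟨p₁, p₂⟩ hp
      simp only [mem_filter, mem_univ, true_and] at hp
      obtain ⟨⟨hlt, hinv⟩, ⟨j₁, rfl⟩, ⟨j₂, rfl⟩⟩ := hp
      refine ⟨(j₁, j₂), ?_, rfl⟩
      simp only [mem_filter, mem_univ, true_and]
      constructor
      · exact hf.lt_iff_lt.1 hlt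
      · have : s (f (ρ j₂)) < s (f (ρ j₁)) := by
          simpa only [hσ, Perm.mul_apply, E_apply] using hinv
        exact hcomp.lt_iff_lt.1 this
  -- not-both part of σ equals not-both part of s
  have hB : (univ.filter (fun p : Fin n × Fin n =>
      (p.1 < p.2 ∧ σ p.2 < σ p.1) ∧ ¬(p.1 ∈ Set.range f ∧ p.2 ∈ Set.range f))).card
      = (univ.filter (fun p : Fin n × Fin n =>
      (p.1 < p.2 ∧ s p.2 < s p.1) ∧ ¬(p.1 ∈ Set.range f ∧ p.2 ∈ Set.range f))).card := by
    apply Finset.card_nbij' (fun p => (E f hf ρ p.1, E f hf ρ p.2))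
      (fun p => ((E f hf ρ)⁻¹ p.1, (E f hf ρ)⁻¹ p.2))
    · rintro ⟨p₁, p₂⟩ hp
      simp only [mem_coe, mem_filter, mem_univ, true_and] at hp ⊢
      obtain ⟨⟨hlt, hinvv⟩, hnot⟩ := hp
      obtain ⟨h1, h2⟩ := transport hconv (E f hf ρ) (E_mem_iff ρ) (E_not_mem ρ) hlt hnot
      exact ⟨⟨h1, hinvv⟩, h2⟩
    · rintro ⟨p₁, p₂⟩ hp
      simp only [mem_coe, mem_filter, mem_univ, true_and] at hp ⊢
      obtain ⟨⟨hlt, hinvv⟩, hnot⟩ := hp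
      have hg0 : ∀ x, (E f hf ρ)⁻¹ x ∈ Set.range f ↔ x ∈ Set.range f := by
        intro x
        conv_rhs => rw [← Perm.apply_inv_self (E f hf ρ) x]
        rw [E_mem_iff]
      have hg1 : ∀ x ∉ Set.range f, (E f hf ρ)⁻¹ x = x := by
        intro x hx
        conv_lhs => rw [← E_not_mem (hf := hf) ρ x hx]
        exact Perm.inv_apply_self _ _
      obtain ⟨h1, h2⟩ := transport hconv _ hg0 hg1 hlt hnot
      refine ⟨⟨h1, ?_⟩, h2⟩
      simpa only [hσ, Perm.mul_apply, Perm.apply_inv_self] using hinvv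
    · rintro ⟨p₁, p₂⟩ _; simp [Prod.ext_iff]
    · rintro ⟨p₁, p₂⟩ _; simp [Prod.ext_iff]
  have hs_no : (univ.filter (fun p : Fin n × Fin n =>
      (p.1 < p.2 ∧ s p.2 < s p.1) ∧ (p.1 ∈ Set.range f ∧ p.2 ∈ Set.range f))).card = 0 := by
    rw [Finset.card_eq_zero, Finset.filter_eq_empty_iff]
    rintro ⟨p₁, p₂⟩ _
    rintro ⟨⟨hlt, hinvv⟩, hp₁, hp₂⟩
    exact absurd (hs hp₁ hp₂ hlt) (not_lt.2 hinvv.le)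
  rw [key σ, key s, hA, hB, hs_no]
  ring

end CSV

namespace CSV2
open Equiv Equiv.Perm Polynomial CSV

variable {k n : ℕ} {f : Fin k → Fin n} {hf : StrictMono f}

noncomputable def sortPerm (f : Fin k → Fin n) (σ : Perm (Fin n)) : Perm (Fin k) :=
  (Tuple.sort (⇑σ ∘ f))⁻¹

noncomputable def shufflePart (f : Fin k → Fin n) (hf : StrictMono f) (σ : Perm (Fin n)) :
    Perm (Fin n) :=
  σ * E f hf (sortPerm f σ)⁻¹

lemma decomp_eq (σ : Perm (Fin n)) :
    shufflePart f hf σ * E f hf (sortPerm f σ) = σ := by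
  rw [shufflePart, mul_assoc, E_inv, inv_mul_cancel, mul_one]

lemma shufflePart_apply (σ : Perm (Fin n)) (j : Fin k) :
    shufflePart f hf σ (f j) = σ (f (Tuple.sort (⇑σ ∘ f) j)) := by
  rw [shufflePart, sortPerm, inv_inv, Perm.mul_apply, E_apply]

lemma shufflePart_smOn (σ : Perm (Fin n)) :
    StrictMonoOn ⇑(shufflePart f hf σ) (Set.range f) := by
  have hmono : Monotone (⇑σ ∘ f ∘ ⇑(Tuple.sort (⇑σ ∘ f))) := Tuple.monotone_sort (⇑σ ∘ f)
  have hinj : Function.Injective (⇑σ ∘ f ∘ ⇑(Tuple.sort (⇑σ ∘ f))) :=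
    σ.injective.comp hf.injective |>.comp (Tuple.sort (⇑σ ∘ f)).injective
  have hsm : StrictMono (⇑σ ∘ f ∘ ⇑(Tuple.sort (⇑σ ∘ f))) := hmono.strictMono_of_injective hinj
  rintro x ⟨a, rfl⟩ y ⟨b, rfl⟩ hxy
  rw [shufflePart_apply, shufflePart_apply]
  exact hsm (hf.lt_iff_lt.1 hxy)

lemma sortPerm_mul (s : Perm (Fin n)) (ρ : Perm (Fin k))
    (hs : StrictMonoOn ⇑s (Set.range f)) :
    sortPerm f (s * E f hf ρ) = ρ := by
  have hg : ⇑(s * E f hf ρ) ∘ f = ⇑s ∘ f ∘ ⇑ρ := by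
    funext j
    simp [Perm.mul_apply, E_apply (hf := hf)]
  have h1 : Monotone ((⇑(s * E f hf ρ) ∘ f) ∘ ⇑(Tuple.sort (⇑(s * E f hf ρ) ∘ f))) :=
    Tuple.monotone_sort _
  have h2 : Monotone ((⇑(s * E f hf ρ) ∘ f) ∘ ⇑(ρ⁻¹ : Perm (Fin k))) := by
    rw [hg]
    have : (⇑s ∘ f ∘ ⇑ρ) ∘ ⇑(ρ⁻¹ : Perm (Fin k)) = ⇑s ∘ f := by
      funext j; simp
    rw [this]
    exact (comp_strictMono hf hs).monotone
  have := Tuple.unique_monotone h1 h2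
  have hinj : Function.Injective (⇑(s * E f hf ρ) ∘ f) :=
    (s * E f hf ρ).injective.comp hf.injective
  have hfun : ⇑(Tuple.sort (⇑(s * E f hf ρ) ∘ f)) = ⇑(ρ⁻¹ : Perm (Fin k)) := by
    funext j
    exact hinj (congrFun this j)
  have heq : Tuple.sort (⇑(s * E f hf ρ) ∘ f) = ρ⁻¹ := Equiv.coe_fn_injective hfun
  rw [sortPerm, heq, inv_inv]

lemma shufflePart_mul (s : Perm (Fin n)) (ρ : Perm (Fin k))
    (hs : StrictMonoOn ⇑s (Set.range f)) :
    shufflePart f hf (s * E f hf ρ) = s := by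
  rw [shufflePart, sortPerm_mul (hf := hf) s ρ hs, mul_assoc, E_inv, mul_inv_cancel, mul_one]

end CSV2

namespace CSV2
open Equiv Equiv.Perm Polynomial CSV Finset

variable {k n : ℕ} {f : Fin k → Fin n} {hf : StrictMono f}
variable (hconv : ∀ ⦃x y z : Fin n⦄, x ∈ Set.range f → z ∈ Set.range f →
    x ≤ y → y ≤ z → y ∈ Set.range f)

include hconv in
lemma sum_decomp (P : Perm (Fin n) → Prop) [DecidablePred P]
    (hP : ∀ (s : Perm (Fin n)) (ρ : Perm (Fin k)), StrictMonoOn ⇑s (Set.range f) → (P (s * E f hf ρ) ↔ P s)) :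
    ∑ σ ∈ univ.filter P, (X : Polynomial ℚ) ^ inversions σ =
      (∑ s ∈ univ.filter (fun s : Perm (Fin n) => StrictMonoOn ⇑s (Set.range f) ∧ P s),
        (X : Polynomial ℚ) ^ inversions s) *
      ∑ ρ : Perm (Fin k), (X : Polynomial ℚ) ^ inversions ρ := by
  classical
  rw [Finset.sum_mul_sum]
  simp_rw [← pow_add]
  rw [← Finset.sum_product']
  apply Finset.sum_nbij' (fun σ => (shufflePart f hf σ, sortPerm f σ))
    (fun x : Perm (Fin n) × Perm (Fin k) => x.1 * E f hf x.2)
  · intro σ hσ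
    simp only [mem_filter, mem_univ, true_and, Finset.mem_product] at hσ ⊢
    have hsm := shufflePart_smOn (hf := hf) σ
    refine ⟨⟨hsm, ?_⟩, trivial⟩
    rw [← hP _ (sortPerm f σ) hsm, decomp_eq]
    exact hσ
  · intro x hx
    simp only [mem_filter, mem_univ, true_and, Finset.mem_product] at hx ⊢
    exact (hP x.1 x.2 hx.1.1).2 hx.1.2
  · intro σ _
    exact decomp_eq σ
  · intro x hx
    simp only [Finset.mem_product, mem_filter, mem_univ, true_and] at hx
    exact Prod.ext (shufflePart_mul x.1 x.2 hx.1.1) (sortPerm_mul x.1 x.2 hx.1.1)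
  · intro σ _
    have hsm := shufflePart_smOn (hf := hf) σ
    rw [← inversions_mul (hf := hf) hconv _ _ hsm, decomp_eq]

include hconv in
lemma sum_decomp_pair (Q : Perm (Fin n) × Perm (Fin n) → Prop) [DecidablePred Q]
    (Q1 : Perm (Fin n) × Perm (Fin n) → Prop) [DecidablePred Q1]
    (Q2 : Perm (Fin k) × Perm (Fin k) → Prop) [DecidablePred Q2]
    (hQ : ∀ (s t : Perm (Fin n)) (ρ ρ' : Perm (Fin k)), StrictMonoOn ⇑s (Set.range f) → StrictMonoOn ⇑t (Set.range f) →
      (Q (s * E f hf ρ, t * E f hf ρ') ↔ Q1 (s, t) ∧ Q2 (ρ, ρ'))) :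
    ∑ p ∈ univ.filter Q, (X : Polynomial ℚ) ^ (inversions p.1 + inversions p.2) =
      (∑ p ∈ univ.filter (fun p : Perm (Fin n) × Perm (Fin n) =>
          (StrictMonoOn ⇑p.1 (Set.range f) ∧ StrictMonoOn ⇑p.2 (Set.range f)) ∧ Q1 p),
        (X : Polynomial ℚ) ^ (inversions p.1 + inversions p.2)) *
      ∑ p ∈ univ.filter Q2, (X : Polynomial ℚ) ^ (inversions p.1 + inversions p.2) := by
  classical
  rw [Finset.sum_mul_sum]
  simp_rw [← pow_add]
  rw [← Finset.sum_product']
  apply Finset.sum_nbij'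
    (fun p : Perm (Fin n) × Perm (Fin n) =>
      ((shufflePart f hf p.1, shufflePart f hf p.2), (sortPerm f p.1, sortPerm f p.2)))
    (fun x : (Perm (Fin n) × Perm (Fin n)) × (Perm (Fin k) × Perm (Fin k)) =>
      (x.1.1 * E f hf x.2.1, x.1.2 * E f hf x.2.2))
  · rintro ⟨σ, τ⟩ hp
    simp only [mem_filter, mem_univ, true_and, Finset.mem_product] at hp ⊢
    have h1 := shufflePart_smOn (hf := hf) σ
    have h2 := shufflePart_smOn (hf := hf) τ
    have := (hQ _ _ _ _ h1 h2).1 (by rw [decomp_eq, decomp_eq]; exact hp)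
    exact ⟨⟨⟨h1, h2⟩, this.1⟩, this.2⟩
  · rintro ⟨⟨s, t⟩, ⟨ρ, ρ'⟩⟩ hx
    simp only [mem_filter, mem_univ, true_and, Finset.mem_product] at hx ⊢
    exact (hQ s t ρ ρ' hx.1.1.1 hx.1.1.2).2 ⟨hx.1.2, hx.2⟩
  · rintro ⟨σ, τ⟩ _
    simp only [decomp_eq]
  · rintro ⟨⟨s, t⟩, ⟨ρ, ρ'⟩⟩ hx
    simp only [mem_filter, mem_univ, true_and, Finset.mem_product] at hx
    simp only [shufflePart_mul _ _ hx.1.1.1, shufflePart_mul _ _ hx.1.1.2,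
      sortPerm_mul _ _ hx.1.1.1, sortPerm_mul _ _ hx.1.1.2]
  · rintro ⟨σ, τ⟩ _
    have h1 := shufflePart_smOn (hf := hf) σ
    have h2 := shufflePart_smOn (hf := hf) τ
    have e1 := inversions_mul (hf := hf) hconv (shufflePart f hf σ) (sortPerm f σ) h1
    have e2 := inversions_mul (hf := hf) hconv (shufflePart f hf τ) (sortPerm f τ) h2
    rw [decomp_eq] at e1 e2
    rw [e1, e2]
    ring_nf

end CSV2

namespace CSV3
open Equiv Equiv.Perm Polynomial CSV CSV2 Finset

variable {n : ℕ}

def headEmb (i : ℕ) (h : i ≤ n) : Fin i → Fin n := fun j => ⟨j, lt_of_lt_of_le j.2 h⟩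

lemma headEmb_strictMono {i : ℕ} (h : i ≤ n) : StrictMono (headEmb i h) :=
  fun _ _ hab => hab

lemma headEmb_range {i : ℕ} (h : i ≤ n) :
    Set.range (headEmb i h) = {x : Fin n | (x : ℕ) < i} := by
  ext x
  constructor
  · rintro ⟨j, rfl⟩; exact j.2
  · intro hx; exact ⟨⟨x, hx⟩, rfl⟩

lemma headEmb_conv {i : ℕ} (h : i ≤ n) :
    ∀ ⦃x y z : Fin n⦄, x ∈ Set.range (headEmb i h) → z ∈ Set.range (headEmb i h) →
      x ≤ y → y ≤ z → y ∈ Set.range (headEmb i h) := by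
  intro x y z hx hz hxy hyz
  rw [headEmb_range] at hx hz ⊢
  simp only [Set.mem_setOf_eq] at hx hz ⊢
  have h2 : (y : ℕ) ≤ (z : ℕ) := hyz
  omega

def tailEmb (i : ℕ) : Fin (n - i) → Fin n := fun j => ⟨i + j, by omega⟩

lemma tailEmb_strictMono {i : ℕ} : StrictMono (tailEmb (n := n) i) := by
  intro a b hab
  simp only [tailEmb, Fin.lt_def]
  have : (a : ℕ) < b := hab
  omega

lemma tailEmb_range {i : ℕ} :
    Set.range (tailEmb (n := n) i) = {x : Fin n | i ≤ (x : ℕ)} := by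
  ext x
  constructor
  · rintro ⟨j, rfl⟩
    show i ≤ i + (j : ℕ)
    omega
  · intro hx
    simp only [Set.mem_setOf_eq] at hx
    refine ⟨⟨(x : ℕ) - i, by omega⟩, ?_⟩
    apply Fin.ext
    show i + ((x : ℕ) - i) = (x : ℕ)
    omega

lemma tailEmb_conv {i : ℕ} :
    ∀ ⦃x y z : Fin n⦄, x ∈ Set.range (tailEmb (n := n) i) → z ∈ Set.range (tailEmb (n := n) i) →
      x ≤ y → y ≤ z → y ∈ Set.range (tailEmb (n := n) i) := by
  intro x y z hx hz hxy hyz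
  rw [tailEmb_range] at hx hz ⊢
  simp only [Set.mem_setOf_eq] at hx hz ⊢
  have h2 : (x : ℕ) ≤ (y : ℕ) := hxy
  omega

def tailIncr (i : ℕ) (σ : Perm (Fin n)) : Prop :=
  ∀ p q : Fin n, (p : ℕ) + 1 = (q : ℕ) → i ≤ (p : ℕ) → σ p < σ q

lemma tailIncr_iff_smOn {i : ℕ} (σ : Perm (Fin n)) :
    tailIncr i σ ↔ StrictMonoOn ⇑σ {x : Fin n | i ≤ (x : ℕ)} := by
  constructor
  · intro h
    have aux : ∀ d (x y : Fin n), i ≤ (x : ℕ) → (y : ℕ) = (x : ℕ) + d + 1 → σ x < σ y := by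
      intro d
      induction d with
      | zero => intro x y hx hy; exact h x y (by omega) hx
      | succ d ih =>
        intro x y hx hy
        have hz : (x : ℕ) + d + 1 < n := by
          have := y.2; omega
        exact (ih x ⟨(x : ℕ) + d + 1, hz⟩ hx rfl).trans
          (h ⟨(x : ℕ) + d + 1, hz⟩ y (by simpa using by omega) (by simp; omega))
    intro x hx y hy hxy
    have : (y : ℕ) = (x : ℕ) + ((y : ℕ) - (x : ℕ) - 1) + 1 := by
      have : (x : ℕ) < y := hxy
      omega
    exact aux _ x y hx this
  · intro h p q hpq hip
    exact h hip (by simp only [Set.mem_setOf_eq]; omega) (by rw [Fin.lt_def]; omega)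

def CAat (σ τ : Perm (Fin n)) (j : ℕ) : Prop :=
  ∃ p q : Fin n, (p : ℕ) = j ∧ (p : ℕ) + 1 = (q : ℕ) ∧ σ p < σ q ∧ τ p < τ q

lemma CAat_lt {σ τ : Perm (Fin n)} {j : ℕ} (h : CAat σ τ j) : j + 1 < n := by
  obtain ⟨p, q, h1, h2, _⟩ := h
  have := q.2
  omega

lemma commonAscent_iff {σ τ : Perm (Fin n)} : CommonAscent σ τ ↔ ∃ j, CAat σ τ j := by
  constructor
  · rintro ⟨p, q, h1, h2, h3⟩
    exact ⟨p, p, q, rfl, h1, h2, h3⟩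
  · rintro ⟨j, p, q, _, h1, h2, h3⟩
    exact ⟨p, q, h1, h2, h3⟩

end CSV3

namespace CSV3
open Equiv Equiv.Perm Polynomial CSV CSV2 Finset

open scoped Classical in
noncomputable def Spoly (m : ℕ) : Polynomial ℚ :=
  ∑ ρ : Perm (Fin m), (X : Polynomial ℚ) ^ inversions ρ

lemma smOn_tail_unique {m : ℕ} (s s' : Perm (Fin (m + 1)))
    (hs : StrictMonoOn ⇑s {x : Fin (m + 1) | 1 ≤ (x : ℕ)})
    (hs' : StrictMonoOn ⇑s' {x : Fin (m + 1) | 1 ≤ (x : ℕ)})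
    (h0 : s 0 = s' 0) : s = s' := by
  have hrange : ∀ (t : Perm (Fin (m + 1))), Set.range (⇑t ∘ Fin.succ) = {y | y ≠ t 0} := by
    intro t
    ext y
    simp only [Set.mem_range, Function.comp_apply, Set.mem_setOf_eq]
    constructor
    · rintro ⟨j, rfl⟩
      intro h
      exact (Fin.succ_ne_zero j) (t.injective h)
    · intro hy
      obtain ⟨j, hj⟩ := Fin.exists_succ_eq (x := t⁻¹ y) |>.2 (fun h => hy (by rw [← h, Perm.apply_inv_self]))
      exact ⟨j, by rw [hj, Perm.apply_inv_self]⟩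
  have hsm : ∀ (t : Perm (Fin (m + 1))), StrictMonoOn ⇑t {x : Fin (m + 1) | 1 ≤ (x : ℕ)} →
      StrictMono (⇑t ∘ Fin.succ) := by
    intro t ht a b hab
    exact ht (by simp [Fin.succ]) (by simp [Fin.succ]) (Fin.succ_lt_succ_iff.2 hab)
  have heq : ⇑s ∘ Fin.succ = ⇑s' ∘ Fin.succ := by
    haveI := Finite.to_wellFoundedLT (α := Fin m)
    apply ((hsm s hs).range_inj (hsm s' hs')).1
    rw [hrange, hrange, h0]
  apply Equiv.ext
  intro x
  rcases Fin.eq_zero_or_eq_succ x with rfl | ⟨j, rfl⟩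
  · exact h0
  · exact congrFun heq j

lemma cycleRange_inv_zero {m : ℕ} (v : Fin (m + 1)) : (Fin.cycleRange v)⁻¹ 0 = v := by
  rw [Perm.inv_eq_iff_eq, Fin.cycleRange_self]

lemma cycleRange_inv_smOn {m : ℕ} (v : Fin (m + 1)) :
    StrictMonoOn ⇑(Fin.cycleRange v)⁻¹ {x : Fin (m + 1) | 1 ≤ (x : ℕ)} := by
  intro x hx y hy hxy
  simp only [Set.mem_setOf_eq] at hx hy
  obtain ⟨a, rfl⟩ := Fin.exists_succ_eq (x := x) |>.2 (by intro h; rw [h] at hx; simp at hx)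
  obtain ⟨b, rfl⟩ := Fin.exists_succ_eq (x := y) |>.2 (by intro h; rw [h] at hy; simp at hy)
  have ha : (Fin.cycleRange v)⁻¹ a.succ = v.succAbove a := Fin.cycleRange_symm_succ v a
  have hb : (Fin.cycleRange v)⁻¹ b.succ = v.succAbove b := Fin.cycleRange_symm_succ v b
  rw [ha, hb]
  exact Fin.strictMono_succAbove v (Fin.succ_lt_succ_iff.1 hxy)

lemma smOn_tail_inversions {m : ℕ} (s : Perm (Fin (m + 1)))
    (hs : StrictMonoOn ⇑s {x : Fin (m + 1) | 1 ≤ (x : ℕ)}) :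
    inversions s = (s 0 : ℕ) := by
  classical
  rw [inversions, ← Fin.card_Iio (s 0)]
  apply Finset.card_bij (fun (p : Fin (m+1) × Fin (m+1)) _ => s p.2)
  · rintro ⟨p₁, p₂⟩ hp
    simp only [mem_filter, mem_univ, true_and] at hp
    obtain ⟨hlt, hinv⟩ := hp
    have hp1 : p₁ = 0 := by
      by_contra h
      have h1 : 1 ≤ (p₁ : ℕ) := by
        have := Fin.pos_of_ne_zero h
        omega
      have h2 : 1 ≤ (p₂ : ℕ) := by
        have : (p₁ : ℕ) < p₂ := hlt
        omega
      exact absurd (hs h1 h2 hlt) (not_lt.2 hinv.le)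
    rw [Finset.mem_Iio]
    rw [hp1] at hinv
    exact hinv
  · rintro ⟨p₁, p₂⟩ hp ⟨q₁, q₂⟩ hq h
    simp only [mem_filter, mem_univ, true_and] at hp hq
    have hp1 : p₁ = 0 := by
      by_contra hne
      have h1 : 1 ≤ (p₁ : ℕ) := by have := Fin.pos_of_ne_zero hne; omega
      have h2 : 1 ≤ (p₂ : ℕ) := by have : (p₁ : ℕ) < p₂ := hp.1; omega
      exact absurd (hs h1 h2 hp.1) (not_lt.2 hp.2.le)
    have hq1 : q₁ = 0 := by
      by_contra hne
      have h1 : 1 ≤ (q₁ : ℕ) := by have := Fin.pos_of_ne_zero hne; omega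
      have h2 : 1 ≤ (q₂ : ℕ) := by have : (q₁ : ℕ) < q₂ := hq.1; omega
      exact absurd (hs h1 h2 hq.1) (not_lt.2 hq.2.le)
    simp only [Prod.mk.injEq]
    exact ⟨hp1.trans hq1.symm, s.injective h⟩
  · intro w hw
    rw [Finset.mem_Iio] at hw
    refine ⟨(0, s⁻¹ w), ?_, by rw [Perm.apply_inv_self]⟩
    simp only [mem_filter, mem_univ, true_and]
    constructor
    · rw [Fin.pos_iff_ne_zero]
      intro h
      have : w = s 0 := by rw [← h, Perm.apply_inv_self]
      exact absurd this (ne_of_lt hw)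
    · rw [Perm.apply_inv_self]
      exact hw

open scoped Classical in
lemma tail_sum_eq_qInt (m : ℕ) :
    ∑ s ∈ univ.filter (fun s : Perm (Fin (m + 1)) =>
        StrictMonoOn ⇑s {x : Fin (m + 1) | 1 ≤ (x : ℕ)}),
      (X : Polynomial ℚ) ^ inversions s = qInt (m + 1) := by
  rw [qInt, ← Fin.sum_univ_eq_sum_range (fun j => (X : Polynomial ℚ) ^ j)]
  apply Finset.sum_nbij' (fun s => s 0) (fun v => (Fin.cycleRange v)⁻¹)
  · intro s _; exact Finset.mem_univ _
  · intro v _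
    simp only [mem_filter, mem_univ, true_and]
    exact cycleRange_inv_smOn v
  · intro s hs
    simp only [mem_filter, mem_univ, true_and] at hs
    exact smOn_tail_unique _ _ (cycleRange_inv_smOn _) hs (by rw [cycleRange_inv_zero])
  · intro v _
    exact cycleRange_inv_zero v
  · intro s hs
    simp only [mem_filter, mem_univ, true_and] at hs
    rw [smOn_tail_inversions s hs]

open scoped Classical in
lemma Spoly_succ (m : ℕ) : Spoly (m + 1) = qInt (m + 1) * Spoly m := by
  have hdec := sum_decomp (hf := tailEmb_strictMono (n := m + 1) (i := 1))
      tailEmb_conv (fun _ : Perm (Fin (m + 1)) => True) (fun s ρ _ => Iff.rfl)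
  simp only [Finset.filter_true, and_true, tailEmb_range] at hdec
  rw [Spoly, hdec, tail_sum_eq_qInt m]
  rfl

lemma Spoly_eq_qFact (m : ℕ) : Spoly m = qFact m := by
  induction m with
  | zero =>
    rw [Spoly, qFact]
    simp [inversions]
  | succ m ih =>
    rw [Spoly_succ, ih, mul_comm]
    exact (Finset.prod_range_succ (fun i => qInt (i + 1)) m).symm

open scoped Classical in
noncomputable def Fpoly (n i : ℕ) : Polynomial ℚ :=
  ∑ s ∈ univ.filter (fun s : Perm (Fin n) => tailIncr i s), (X : Polynomial ℚ) ^ inversions s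

open scoped Classical in
noncomputable def Cpoly (n i : ℕ) : Polynomial ℚ :=
  ∑ s ∈ univ.filter (fun s : Perm (Fin n) =>
      StrictMonoOn ⇑s {x : Fin n | (x : ℕ) < i} ∧ tailIncr i s), (X : Polynomial ℚ) ^ inversions s

open scoped Classical in
lemma qFact_eq_Fpoly_mul (n i : ℕ) : qFact n = Fpoly n i * qFact (n - i) := by
  have hdec := sum_decomp (hf := tailEmb_strictMono (n := n) (i := i))
      tailEmb_conv (fun _ : Perm (Fin n) => True) (fun s ρ _ => Iff.rfl)
  simp only [Finset.filter_true, and_true, tailEmb_range] at hdec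
  rw [← Spoly_eq_qFact, ← Spoly_eq_qFact, Spoly, hdec]
  congr 1
  rw [Fpoly]
  apply Finset.sum_congr _ (fun _ _ => rfl)
  apply Finset.filter_congr
  intro s _
  rw [tailIncr_iff_smOn]

lemma tailIncr_mulE {i : ℕ} (h : i ≤ n) (s : Perm (Fin n)) (ρ : Perm (Fin i)) :
    tailIncr i (s * E (headEmb i h) (headEmb_strictMono h) ρ) ↔ tailIncr i s := by
  have key : ∀ x : Fin n, i ≤ (x : ℕ) →
      (s * E (headEmb i h) (headEmb_strictMono h) ρ) x = s x := by
    intro x hx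
    rw [Perm.mul_apply, E_not_mem]
    rw [headEmb_range]
    simp only [Set.mem_setOf_eq]
    omega
  constructor
  · intro ht p q hpq hip
    have := ht p q hpq hip
    rwa [key p hip, key q (by omega)] at this
  · intro ht p q hpq hip
    rw [key p hip, key q (by omega)]
    exact ht p q hpq hip

open scoped Classical in
lemma Fpoly_eq (n i : ℕ) (h : i ≤ n) : Fpoly n i = Cpoly n i * qFact i := by
  have hdec := sum_decomp (hf := headEmb_strictMono (n := n) h)
      (headEmb_conv h) (fun s : Perm (Fin n) => tailIncr i s)
      (fun s ρ _ => tailIncr_mulE h s ρ)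
  simp only [headEmb_range] at hdec
  rw [Fpoly]
  rw [hdec, ← Spoly_eq_qFact, Spoly, Cpoly]

lemma qFact_factor (n i : ℕ) (h : i ≤ n) :
    qFact n = Cpoly n i * qFact i * qFact (n - i) := by
  rw [qFact_eq_Fpoly_mul n i, Fpoly_eq n i h]

lemma CAat_extract {σ τ : Perm (Fin n)} {j : ℕ} (hca : CAat σ τ j) (p q : Fin n)
    (hp : (p : ℕ) = j) (hq : (q : ℕ) = j + 1) : σ p < σ q ∧ τ p < τ q := by
  obtain ⟨p', q', e1, e2, h1, h2⟩ := hca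
  have hp' : p' = p := Fin.ext (by omega)
  have hq' : q' = q := Fin.ext (by omega)
  rw [hp', hq'] at h1 h2
  exact ⟨h1, h2⟩

lemma CAat_of {i : ℕ} {σ τ : Perm (Fin n)} (t1 : tailIncr i σ) (t2 : tailIncr i τ)
    {j : ℕ} (hj : i ≤ j) (hjn : j + 1 < n) : CAat σ τ j := by
  refine ⟨⟨j, by omega⟩, ⟨j + 1, hjn⟩, rfl, rfl, ?_, ?_⟩
  · exact t1 _ _ rfl hj
  · exact t2 _ _ rfl hj

lemma ascent_transfer {i : ℕ} (h : i ≤ n) (s : Perm (Fin n)) (ρ : Perm (Fin i))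
    (hs : StrictMonoOn ⇑s (Set.range (headEmb i h))) (a b : Fin i) :
    ((s * E (headEmb i h) (headEmb_strictMono h) ρ) (headEmb i h a)
      < (s * E (headEmb i h) (headEmb_strictMono h) ρ) (headEmb i h b)) ↔ ρ a < ρ b := by
  rw [Perm.mul_apply, Perm.mul_apply, E_apply, E_apply]
  exact (comp_strictMono (headEmb_strictMono h) hs).lt_iff_lt

lemma noCA_transfer {i : ℕ} (h : i ≤ n) (s t : Perm (Fin n)) (ρ ρ' : Perm (Fin i))
    (hs : StrictMonoOn ⇑s (Set.range (headEmb i h)))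
    (ht : StrictMonoOn ⇑t (Set.range (headEmb i h))) :
    (∀ j, j + 1 < i →
        ¬ CAat (s * E (headEmb i h) (headEmb_strictMono h) ρ)
          (t * E (headEmb i h) (headEmb_strictMono h) ρ') j) ↔ ¬ CommonAscent ρ ρ' := by
  set σ := s * E (headEmb i h) (headEmb_strictMono h) ρ with hσ
  set τ := t * E (headEmb i h) (headEmb_strictMono h) ρ' with hτ
  have key : CommonAscent ρ ρ' ↔ ∃ j, j + 1 < i ∧ CAat σ τ j := by
    constructor
    · rintro ⟨a, b, hab, h1, h2⟩
      refine ⟨a, by omega, headEmb i h a, headEmb i h b, rfl, hab, ?_, ?_⟩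
      · exact (ascent_transfer h s ρ hs a b).2 h1
      · exact (ascent_transfer h t ρ' ht a b).2 h2
    · rintro ⟨j, hj, hca⟩
      set a : Fin i := ⟨j, by omega⟩
      set b : Fin i := ⟨j + 1, hj⟩
      obtain ⟨h1, h2⟩ := CAat_extract hca (headEmb i h a) (headEmb i h b) rfl rfl
      refine ⟨a, b, rfl, ?_, ?_⟩
      · exact (ascent_transfer h s ρ hs a b).1 h1
      · exact (ascent_transfer h t ρ' ht a b).1 h2
  rw [key]
  push_neg
  constructor
  · intro H j hj hca; exact (H j hj) hca
  · intro H j hj hca; exact (H j hj) hca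

lemma pair_split {α : Type*} [Fintype α] [DecidableEq α] (A : α → Prop) [DecidablePred A]
    (g : α → ℕ) :
    ∑ p ∈ univ.filter (fun p : α × α => A p.1 ∧ A p.2), (X : Polynomial ℚ) ^ (g p.1 + g p.2)
      = (∑ s ∈ univ.filter A, (X : Polynomial ℚ) ^ g s) ^ 2 := by
  rw [sq, Finset.sum_mul_sum]
  simp_rw [← pow_add]
  rw [← Finset.sum_product', ← Finset.univ_product_univ, Finset.filter_product]

open scoped Classical in
noncomputable def Gpoly (n i : ℕ) : Polynomial ℚ :=
  ∑ p ∈ univ.filter (fun p : Perm (Fin n) × Perm (Fin n) =>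
      tailIncr i p.1 ∧ tailIncr i p.2 ∧ ∀ j, j + 1 < i → ¬ CAat p.1 p.2 j),
    (X : Polynomial ℚ) ^ (inversions p.1 + inversions p.2)

open scoped Classical in
noncomputable def Hpoly (n i : ℕ) : Polynomial ℚ :=
  ∑ p ∈ univ.filter (fun p : Perm (Fin n) × Perm (Fin n) =>
      ∀ j, j + 1 < n → (CAat p.1 p.2 j ↔ i ≤ j)),
    (X : Polynomial ℚ) ^ (inversions p.1 + inversions p.2)

open scoped Classical in
lemma Gpoly_eq (n i : ℕ) (h : i ≤ n) : Gpoly n i = Cpoly n i ^ 2 * W i := by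
  rw [Gpoly, sum_decomp_pair (hf := headEmb_strictMono (n := n) h) (headEmb_conv h)
      (Q1 := fun p : Perm (Fin n) × Perm (Fin n) => tailIncr i p.1 ∧ tailIncr i p.2)
      (Q2 := fun p : Perm (Fin i) × Perm (Fin i) => ¬ CommonAscent p.1 p.2)
      (hQ := by
        intro s t ρ ρ' hs ht
        rw [tailIncr_mulE h s ρ, tailIncr_mulE h t ρ']
        rw [noCA_transfer h s t ρ ρ' hs ht]
        tauto)]
  congr 1
  rw [Cpoly, ← pair_split]
  apply Finset.sum_congr _ (fun _ _ => rfl)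
  apply Finset.filter_congr
  intro p _
  rw [headEmb_range]
  tauto

lemma Q0_iff (σ τ : Perm (Fin n)) :
    (tailIncr 0 σ ∧ tailIncr 0 τ ∧ ∀ j, j + 1 < 0 → ¬ CAat σ τ j)
      ↔ (∀ j, j + 1 < n → (CAat σ τ j ↔ 0 ≤ j)) := by
  constructor
  · rintro ⟨t1, t2, -⟩ j hj
    exact iff_of_true (CAat_of t1 t2 (Nat.zero_le j) hj) (Nat.zero_le j)
  · intro H
    refine ⟨?_, ?_, by omega⟩
    · intro p q hpq hip
      have hjn : (p : ℕ) + 1 < n := by have := q.2; omega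
      exact (CAat_extract ((H p hjn).2 (Nat.zero_le _)) p q rfl (by omega)).1
    · intro p q hpq hip
      have hjn : (p : ℕ) + 1 < n := by have := q.2; omega
      exact (CAat_extract ((H p hjn).2 (Nat.zero_le _)) p q rfl (by omega)).2

lemma Qsucc_iff (m : ℕ) (hm : m + 1 < n) (σ τ : Perm (Fin n)) :
    (tailIncr (m + 1) σ ∧ tailIncr (m + 1) τ ∧ ∀ j, j + 1 < m + 1 → ¬ CAat σ τ j)
      ↔ ((∀ j, j + 1 < n → (CAat σ τ j ↔ m ≤ j))
          ∨ (∀ j, j + 1 < n → (CAat σ τ j ↔ m + 1 ≤ j))) := by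
  constructor
  · rintro ⟨t1, t2, hno⟩
    by_cases hca : CAat σ τ m
    · left
      intro j hj
      rcases lt_trichotomy j m with h | rfl | h
      · exact iff_of_false (hno j (by omega)) (by omega)
      · exact iff_of_true hca le_rfl
      · exact iff_of_true (CAat_of t1 t2 (by omega) hj) (by omega)
    · right
      intro j hj
      rcases lt_trichotomy j m with h | rfl | h
      · exact iff_of_false (hno j (by omega)) (by omega)
      · exact iff_of_false hca (by omega)
      · exact iff_of_true (CAat_of t1 t2 (by omega) hj) (by omega)
  · intro H
    have key : ∀ i', m ≤ i' → i' ≤ m + 1 → (∀ j, j + 1 < n → (CAat σ τ j ↔ i' ≤ j)) →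
        (tailIncr (m + 1) σ ∧ tailIncr (m + 1) τ ∧ ∀ j, j + 1 < m + 1 → ¬ CAat σ τ j) := by
      intro i' hi1 hi2 H'
      refine ⟨?_, ?_, ?_⟩
      · intro p q hpq hip
        have hjn : (p : ℕ) + 1 < n := by have := q.2; omega
        exact (CAat_extract ((H' p hjn).2 (by omega)) p q rfl (by omega)).1
      · intro p q hpq hip
        have hjn : (p : ℕ) + 1 < n := by have := q.2; omega
        exact (CAat_extract ((H' p hjn).2 (by omega)) p q rfl (by omega)).2
      · intro j hj hca
        have := (H' j (CAat_lt hca)).1 hca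
        omega
    rcases H with H' | H'
    · exact key m le_rfl (by omega) H'
    · exact key (m + 1) (by omega) le_rfl H'

lemma Qn_iff (σ τ : Perm (Fin n)) :
    (tailIncr n σ ∧ tailIncr n τ ∧ ∀ j, j + 1 < n → ¬ CAat σ τ j)
      ↔ (∀ j, j + 1 < n → (CAat σ τ j ↔ n ≤ j)) := by
  constructor
  · rintro ⟨-, -, hno⟩ j hj
    exact iff_of_false (hno j hj) (by omega)
  · intro H
    refine ⟨?_, ?_, fun j hj hca => by have := (H j hj).1 hca; omega⟩
    · intro p q _ hip
      exact absurd hip (by have := p.2; omega)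
    · intro p q _ hip
      exact absurd hip (by have := p.2; omega)

lemma Hn_iff (σ τ : Perm (Fin n)) :
    (∀ j, j + 1 < n → (CAat σ τ j ↔ n ≤ j))
      ↔ (∀ j, j + 1 < n → (CAat σ τ j ↔ n - 1 ≤ j)) := by
  constructor <;> intro H j hj <;> rw [H j hj] <;> omega

open scoped Classical in
lemma Gpoly_zero (n : ℕ) : Gpoly n 0 = Hpoly n 0 := by
  rw [Gpoly, Hpoly]
  apply Finset.sum_congr _ (fun _ _ => rfl)
  apply Finset.filter_congr
  intro p _
  exact Q0_iff p.1 p.2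

open scoped Classical in
lemma Gpoly_succ (n m : ℕ) (hm : m + 1 < n) :
    Gpoly n (m + 1) = Hpoly n m + Hpoly n (m + 1) := by
  rw [Gpoly, Hpoly, Hpoly]
  rw [Finset.filter_congr (fun p (_ : p ∈ univ) => Qsucc_iff m hm p.1 p.2)]
  rw [Finset.filter_or]
  rw [Finset.sum_union]
  rw [Finset.disjoint_left]
  intro p hp1 hp2
  simp only [Finset.mem_filter, Finset.mem_univ, true_and] at hp1 hp2
  have h1 := (hp1 m hm).2 le_rfl
  have h2 := (hp2 m hm).1 h1
  omega

open scoped Classical in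
lemma Gpoly_top (n : ℕ) : Gpoly n n = Hpoly n (n - 1) := by
  rw [Gpoly, Hpoly]
  apply Finset.sum_congr _ (fun _ _ => rfl)
  apply Finset.filter_congr
  intro p _
  rw [Qn_iff p.1 p.2]
  exact Hn_iff p.1 p.2

lemma tele (n : ℕ) : ∀ m, m + 1 ≤ n →
    ∑ i ∈ Finset.range (m + 1), (-1 : Polynomial ℚ) ^ i * Gpoly n i
      = (-1) ^ m * Hpoly n m := by
  intro m
  induction m with
  | zero => intro _; simp [Gpoly_zero]
  | succ m ih =>
    intro hm
    rw [Finset.sum_range_succ, ih (by omega), Gpoly_succ n m (by omega)]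
    ring

lemma poly_id (n : ℕ) (hn : 1 ≤ n) :
    ∑ i ∈ Finset.range (n + 1), (-1 : Polynomial ℚ) ^ i * Gpoly n i = 0 := by
  obtain ⟨m, rfl⟩ : ∃ m, n = m + 1 := ⟨n - 1, by omega⟩
  rw [Finset.sum_range_succ, tele (m + 1) m (by omega), Gpoly_top (m + 1)]
  have h1 : (m + 1) - 1 = m := by omega
  rw [h1]
  ring

lemma qInt_ne_zero (j : ℕ) : qInt (j + 1) ≠ 0 := by
  intro h
  have h2 := congrArg (Polynomial.eval 1) h
  rw [qInt, Polynomial.eval_finset_sum] at h2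
  simp only [Polynomial.eval_pow, Polynomial.eval_X, one_pow, Finset.sum_const,
    Finset.card_range, nsmul_eq_mul, mul_one, Polynomial.eval_zero] at h2
  exact (Nat.cast_ne_zero (R := ℚ)).2 (Nat.succ_ne_zero j) h2

lemma qFact_ne_zero (m : ℕ) : qFact m ≠ 0 := by
  rw [qFact]
  exact Finset.prod_ne_zero_iff.2 (fun j _ => qInt_ne_zero j)

theorem q_CSV_identity' (n : ℕ) (hn : 1 ≤ n) :
    ∑ i ∈ Finset.range (n + 1),
      (-1 : RatFunc ℚ) ^ i * qBinom n i ^ 2 *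
        algebraMap (Polynomial ℚ) (RatFunc ℚ) (W i) = 0 := by
  have key : ∀ i ∈ Finset.range (n + 1),
      (-1 : RatFunc ℚ) ^ i * qBinom n i ^ 2 * algebraMap (Polynomial ℚ) (RatFunc ℚ) (W i)
        = algebraMap (Polynomial ℚ) (RatFunc ℚ) ((-1 : Polynomial ℚ) ^ i * Gpoly n i) := by
    intro i hi
    rw [Finset.mem_range] at hi
    have hi' : i ≤ n := by omega
    have ha := RatFunc.algebraMap_ne_zero (K := ℚ) (qFact_ne_zero i)
    have hb := RatFunc.algebraMap_ne_zero (K := ℚ) (qFact_ne_zero (n - i))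
    have hq : qBinom n i = algebraMap (Polynomial ℚ) (RatFunc ℚ) (Cpoly n i) := by
      rw [qBinom, qFact_factor n i hi', map_mul, map_mul, mul_assoc, mul_div_assoc,
        div_self (mul_ne_zero ha hb), mul_one]
    rw [hq, Gpoly_eq n i hi', map_mul, map_mul, map_pow, map_pow, map_neg, map_one]
    ring
  rw [Finset.sum_congr rfl key, ← map_sum, poly_id n hn, map_zero]

end CSV3

/-- `∑_{i=0}^n (-1)^i [n choose i]_q^2 W_i(q) = 0` for `n ≥ 1`. -/
theorem q_CSV_identity (n : ℕ) (hn : 1 ≤ n) :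
    ∑ i ∈ Finset.range (n + 1),
      (-1 : RatFunc ℚ) ^ i * qBinom n i ^ 2 *
        algebraMap (Polynomial ℚ) (RatFunc ℚ) (W i) = 0 :=
  CSV3.q_CSV_identity' n hn
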